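/- Let α, β ∈ ℝ and let S, T ⊆ ℝ² be finite nonempty sets. Then: (i) the function t ↦ h_{←^α T}((t, αt + β)) is monotonically nondecreasing and t ↦ h_{→^α S}((t, αt + β)) is monotonically nonincreasing; (ii) there exists x* ∈ ℝ with h_{→^α S}((x*, αx* + β)) = h_{←^α T}((x*, αx* + β)); and (iii) for every such x*, the common value equals max_{(p,q) ∈ S × T} δ'_{pq}(α, β). -/
import Mathlib


open Metric Set

noncomputable section

/-- Points of the Euclidean plane ℝ². -/
abbrev Pt : Type := EuclideanSpace ℝ (Fin 2)

/-- The point (x, y) ∈ ℝ². -/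
def pt (x y : ℝ) : Pt := (WithLp.equiv 2 (Fin 2 → ℝ)).symm ![x, y]

/-- The leftward horizontal halfline ←p = {(x, y_p) : x ≤ x_p}. -/
def leftRay (p : Pt) : Set Pt := {z : Pt | z 1 = p 1 ∧ z 0 ≤ p 0}

/-- The rightward horizontal halfline →p = {(x, y_p) : x ≥ x_p}. -/
def rightRay (p : Pt) : Set Pt := {z : Pt | z 1 = p 1 ∧ p 0 ≤ z 0}

/-- h_{←p}(q): Euclidean distance from q to the leftward halfline at p. -/
def hL (p q : Pt) : ℝ := infDist q (leftRay p)

/-- h_{→p}(q): Euclidean distance from q to the rightward halfline at p. -/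
def hR (p q : Pt) : ℝ := infDist q (rightRay p)

/-- h_{←S}(q) = max_{p ∈ S} h_{←p}(q). -/
def hLS (S : Finset Pt) (hS : S.Nonempty) (q : Pt) : ℝ := S.sup' hS fun p => hL p q

/-- h_{→S}(q) = max_{p ∈ S} h_{→p}(q). -/
def hRS (S : Finset Pt) (hS : S.Nonempty) (q : Pt) : ℝ := S.sup' hS fun p => hR p q

/-- δ_{pq}(y) = inf_x max{‖(x,y) − p‖, ‖(x,y) − q‖}. -/
def delta (p q : Pt) (y : ℝ) : ℝ := ⨅ x : ℝ, max ‖pt x y - p‖ ‖pt x y - q‖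

/-- δ'_{pq}(y) = inf_x max{h_{←q}((x,y)), h_{→p}((x,y))}. -/
def delta' (p q : Pt) (y : ℝ) : ℝ := ⨅ x : ℝ, max (hL q (pt x y)) (hR p (pt x y))


/-- The leftward halfline of slope α at p: { p − t·(1, α) : t ≥ 0 }. -/
def leftRayA (α : ℝ) (p : Pt) : Set Pt := {z : Pt | ∃ t : ℝ, 0 ≤ t ∧ z = p - t • pt 1 α}

/-- The rightward halfline of slope α at p: { p + t·(1, α) : t ≥ 0 }. -/
def rightRayA (α : ℝ) (p : Pt) : Set Pt := {z : Pt | ∃ t : ℝ, 0 ≤ t ∧ z = p + t • pt 1 α}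

/-- h_{←^α p}(q): distance from q to the leftward halfline of slope α at p. -/
def hLA (α : ℝ) (p q : Pt) : ℝ := infDist q (leftRayA α p)

/-- h_{→^α p}(q): distance from q to the rightward halfline of slope α at p. -/
def hRA (α : ℝ) (p q : Pt) : ℝ := infDist q (rightRayA α p)

/-- h_{←^α T}(q) = max_{p ∈ T} h_{←^α p}(q). -/
def hLAS (α : ℝ) (T : Finset Pt) (hT : T.Nonempty) (q : Pt) : ℝ :=
  T.sup' hT fun p => hLA α p q

/-- h_{→^α T}(q) = max_{p ∈ T} h_{→^α p}(q). -/
def hRAS (α : ℝ) (T : Finset Pt) (hT : T.Nonempty) (q : Pt) : ℝ :=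
  T.sup' hT fun p => hRA α p q

/-- δ_{pq}(α, β) = inf_x max{‖(x, αx+β) − p‖, ‖(x, αx+β) − q‖}. -/
def deltaA (p q : Pt) (α β : ℝ) : ℝ :=
  ⨅ x : ℝ, max ‖pt x (α * x + β) - p‖ ‖pt x (α * x + β) - q‖

/-- δ'_{pq}(α, β) = inf_x max{h_{←^α q}((x, αx+β)), h_{→^α p}((x, αx+β))}. -/
def deltaA' (p q : Pt) (α β : ℝ) : ℝ :=
  ⨅ x : ℝ, max (hLA α q (pt x (α * x + β))) (hRA α p (pt x (α * x + β)))

-- AUX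
namespace Stmt15Aux

lemma le_infDist' {s : Set Pt} {x : Pt} {r : ℝ} (hs : s.Nonempty)
    (h : ∀ y ∈ s, r ≤ dist x y) : r ≤ infDist x s := by
  by_contra hlt
  push_neg at hlt
  obtain ⟨y, hy, hd⟩ := (infDist_lt_iff hs).mp hlt
  exact absurd (h y hy) (not_le.mpr hd)

lemma line_eq (α β t : ℝ) : pt t (α*t+β) = pt 0 β + t • pt 1 α := by
  ext i; fin_cases i <;> simp [pt] <;> try ring

lemma one_le_norm_v (α : ℝ) : (1:ℝ) ≤ ‖pt 1 α‖ := by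
  have h : ‖pt 1 α‖ = Real.sqrt (1 + α^2) := by
    rw [EuclideanSpace.norm_eq]
    congr 1
    simp [pt, Fin.sum_univ_two]
  rw [h]
  nlinarith [Real.sq_sqrt (by positivity : (0:ℝ) ≤ 1 + α^2), Real.sqrt_nonneg (1+α^2)]

lemma leftRayA_nonempty (α : ℝ) (p : Pt) : (leftRayA α p).Nonempty :=
  ⟨p, 0, le_refl 0, by simp⟩

lemma rightRayA_nonempty (α : ℝ) (p : Pt) : (rightRayA α p).Nonempty :=
  ⟨p, 0, le_refl 0, by simp⟩

lemma hLA_mono (α β : ℝ) (p : Pt) : Monotone fun t : ℝ => hLA α p (pt t (α*t+β)) := by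
  intro s s' hss'
  simp only [hLA, line_eq]
  apply le_infDist' (leftRayA_nonempty α p)
  rintro y ⟨t, ht, rfl⟩
  have key : pt 0 β + s • pt 1 α = (pt 0 β + s' • pt 1 α) - (s' - s) • pt 1 α := by
    module
  have key2 : (p - t • pt 1 α) - (s' - s) • pt 1 α = p - (t + (s' - s)) • pt 1 α := by
    module
  calc infDist (pt 0 β + s • pt 1 α) (leftRayA α p)
      ≤ dist (pt 0 β + s • pt 1 α) (p - (t + (s' - s)) • pt 1 α) :=
        infDist_le_dist_of_mem ⟨t + (s' - s), by linarith, rfl⟩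
    _ = dist ((pt 0 β + s' • pt 1 α) - (s' - s) • pt 1 α)
          ((p - t • pt 1 α) - (s' - s) • pt 1 α) := by rw [← key, key2]
    _ = dist (pt 0 β + s' • pt 1 α) (p - t • pt 1 α) := dist_sub_right _ _ _

lemma hRA_anti (α β : ℝ) (p : Pt) : Antitone fun t : ℝ => hRA α p (pt t (α*t+β)) := by
  intro s s' hss'
  simp only [hRA, line_eq]
  apply le_infDist' (rightRayA_nonempty α p)
  rintro y ⟨t, ht, rfl⟩
  have key : pt 0 β + s' • pt 1 α = (pt 0 β + s • pt 1 α) + (s' - s) • pt 1 α := by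
    module
  have key2 : (p + t • pt 1 α) + (s' - s) • pt 1 α = p + (t + (s' - s)) • pt 1 α := by
    module
  calc infDist (pt 0 β + s' • pt 1 α) (rightRayA α p)
      ≤ dist (pt 0 β + s' • pt 1 α) (p + (t + (s' - s)) • pt 1 α) :=
        infDist_le_dist_of_mem ⟨t + (s' - s), by linarith, rfl⟩
    _ = dist ((pt 0 β + s • pt 1 α) + (s' - s) • pt 1 α)
          ((p + t • pt 1 α) + (s' - s) • pt 1 α) := by rw [← key, key2]
    _ = dist (pt 0 β + s • pt 1 α) (p + t • pt 1 α) := dist_add_right _ _ _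

lemma cont_line (α β : ℝ) : Continuous fun t : ℝ => pt t (α*t+β) := by
  have : (fun t : ℝ => pt t (α*t+β)) = fun t : ℝ => pt 0 β + t • pt 1 α := by
    funext t; exact line_eq α β t
  rw [this]
  exact continuous_const.add (continuous_id.smul continuous_const)

lemma cont_hLA (α β : ℝ) (p : Pt) : Continuous fun t : ℝ => hLA α p (pt t (α*t+β)) :=
  (continuous_infDist_pt _).comp (cont_line α β)

lemma cont_hRA (α β : ℝ) (p : Pt) : Continuous fun t : ℝ => hRA α p (pt t (α*t+β)) :=
  (continuous_infDist_pt _).comp (cont_line α β)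

end Stmt15Aux

set_option maxHeartbeats 1000000 in
theorem stmt_15 (α β : ℝ) (S T : Finset Pt) (hS : S.Nonempty) (hT : T.Nonempty) :
    (Monotone fun t : ℝ => hLAS α T hT (pt t (α * t + β))) ∧
    (Antitone fun t : ℝ => hRAS α S hS (pt t (α * t + β))) ∧
    (∃ xs : ℝ, hRAS α S hS (pt xs (α * xs + β)) = hLAS α T hT (pt xs (α * xs + β))) ∧
    (∀ xs : ℝ, hRAS α S hS (pt xs (α * xs + β)) = hLAS α T hT (pt xs (α * xs + β)) →
      hRAS α S hS (pt xs (α * xs + β)) =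
        (S ×ˢ T).sup' (hS.product hT) fun pq => deltaA' pq.1 pq.2 α β) := by
  open Stmt15Aux in
  -- monotone part
  have hGmono : Monotone fun t : ℝ => hLAS α T hT (pt t (α * t + β)) := by
    intro s s' h
    simp only [hLAS]
    apply Finset.sup'_le
    intro p hp
    exact le_trans (hLA_mono α β p h)
      (Finset.le_sup' (fun p => hLA α p (pt s' (α * s' + β))) hp)
  have hFanti : Antitone fun t : ℝ => hRAS α S hS (pt t (α * t + β)) := by
    intro s s' h
    simp only [hRAS]
    apply Finset.sup'_le
    intro p hp
    exact le_trans (hRA_anti α β p h)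
      (Finset.le_sup' (fun p => hRA α p (pt s (α * s + β))) hp)
  refine ⟨hGmono, hFanti, ?_, ?_⟩
  · -- existence by IVT
    set f : ℝ → ℝ := fun t => hRAS α S hS (pt t (α * t + β)) with hf
    set g : ℝ → ℝ := fun t => hLAS α T hT (pt t (α * t + β)) with hg
    have hfc : Continuous f := by
      simp only [hf, hRAS]
      exact Continuous.finset_sup'_apply hS fun p _ => cont_hRA α β p
    have hgc : Continuous g := by
      simp only [hg, hLAS]
      exact Continuous.finset_sup'_apply hT fun p _ => cont_hLA α β p
    obtain ⟨p0, hp0⟩ := hS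
    obtain ⟨q0, hq0⟩ := hT
    set C : ℝ := dist (pt 0 β) p0 with hC
    set C' : ℝ := dist (pt 0 β) q0 with hC'
    set a : ℝ := -(|C| + |g 0| + 1) with ha
    set b : ℝ := |C'| + |f 0| + 1 with hb
    have hC0 : 0 ≤ C := dist_nonneg
    have hC'0 : 0 ≤ C' := dist_nonneg
    have ha0 : a ≤ 0 := by
      have := abs_nonneg C; have := abs_nonneg (g 0); simp only [ha]; linarith
    have hb0 : 0 ≤ b := by
      have := abs_nonneg C'; have := abs_nonneg (f 0); simp only [hb]; linarith
    -- lower bound for f at a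
    have hfa : g a ≤ f a := by
      have h1 : -a - C ≤ hRA α p0 (pt a (α * a + β)) := by
        rw [hRA, line_eq]
        apply le_infDist' (rightRayA_nonempty α p0)
        rintro y ⟨t, ht, rfl⟩
        rw [dist_eq_norm]
        have heq : (pt 0 β + a • pt 1 α) - (p0 + t • pt 1 α)
            = (pt 0 β - p0) + (a - t) • pt 1 α := by module
        rw [heq]
        have h2 : ‖(a - t) • pt 1 α‖ - ‖pt 0 β - p0‖
            ≤ ‖(pt 0 β - p0) + (a - t) • pt 1 α‖ := by
          have := norm_add_le ((pt 0 β - p0) + (a - t) • pt 1 α) (-(pt 0 β - p0))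
          simp only [add_assoc] at this
          simp only [norm_neg] at this
          calc ‖(a - t) • pt 1 α‖ - ‖pt 0 β - p0‖
              ≤ ‖(pt 0 β - p0) + (a - t) • pt 1 α + -(pt 0 β - p0)‖ - ‖pt 0 β - p0‖ := by
                have : (pt 0 β - p0) + (a - t) • pt 1 α + -(pt 0 β - p0)
                    = (a - t) • pt 1 α := by module
                rw [this]
            _ ≤ ‖(pt 0 β - p0) + (a - t) • pt 1 α‖ := by
                have := norm_add_le ((pt 0 β - p0) + (a - t) • pt 1 α) (-(pt 0 β - p0))
                rw [norm_neg] at this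
                linarith
        have h3 : -a - C ≤ ‖(a - t) • pt 1 α‖ - ‖pt 0 β - p0‖ := by
          rw [norm_smul, Real.norm_eq_abs]
          have hv := one_le_norm_v α
          have habs : |a - t| = t - a := by
            rw [abs_of_nonpos (by linarith)]; ring
          rw [habs]
          have h4 : t - a ≤ (t - a) * ‖pt 1 α‖ := by
            nlinarith [ht, ha0]
          have h5 : ‖pt 0 β - p0‖ = C := by rw [hC, dist_eq_norm]
          rw [h5]
          linarith
        linarith
      have h6 : hRA α p0 (pt a (α * a + β)) ≤ f a :=
        Finset.le_sup' (fun p => hRA α p (pt a (α * a + β))) hp0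
      have h7 : g a ≤ g 0 := hGmono ha0
      have h8 : -a - C = |C| + |g 0| + 1 - C := by rw [ha]; ring
      have h9 : g 0 ≤ |g 0| := le_abs_self _
      have h10 : C ≤ |C| := le_abs_self _
      linarith
    have hfb : f b ≤ g b := by
      have h1 : b - C' ≤ hLA α q0 (pt b (α * b + β)) := by
        rw [hLA, line_eq]
        apply le_infDist' (leftRayA_nonempty α q0)
        rintro y ⟨t, ht, rfl⟩
        rw [dist_eq_norm]
        have heq : (pt 0 β + b • pt 1 α) - (q0 - t • pt 1 α)
            = (pt 0 β - q0) + (b + t) • pt 1 α := by module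
        rw [heq]
        have h2 : ‖(b + t) • pt 1 α‖ - ‖pt 0 β - q0‖
            ≤ ‖(pt 0 β - q0) + (b + t) • pt 1 α‖ := by
          calc ‖(b + t) • pt 1 α‖ - ‖pt 0 β - q0‖
              ≤ ‖(pt 0 β - q0) + (b + t) • pt 1 α + -(pt 0 β - q0)‖ - ‖pt 0 β - q0‖ := by
                have : (pt 0 β - q0) + (b + t) • pt 1 α + -(pt 0 β - q0)
                    = (b + t) • pt 1 α := by module
                rw [this]
            _ ≤ ‖(pt 0 β - q0) + (b + t) • pt 1 α‖ := by
                have := norm_add_le ((pt 0 β - q0) + (b + t) • pt 1 α) (-(pt 0 β - q0))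
                rw [norm_neg] at this
                linarith
        have h3 : b - C' ≤ ‖(b + t) • pt 1 α‖ - ‖pt 0 β - q0‖ := by
          rw [norm_smul, Real.norm_eq_abs]
          have hv := one_le_norm_v α
          have habs : |b + t| = b + t := abs_of_nonneg (by linarith)
          rw [habs]
          have h4 : b + t ≤ (b + t) * ‖pt 1 α‖ := by nlinarith
          have h5 : ‖pt 0 β - q0‖ = C' := by rw [hC', dist_eq_norm]
          rw [h5]
          linarith
        linarith
      have h6 : hLA α q0 (pt b (α * b + β)) ≤ g b :=
        Finset.le_sup' (fun p => hLA α p (pt b (α * b + β))) hq0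
      have h7 : f b ≤ f 0 := hFanti hb0
      have h8 : f 0 ≤ |f 0| := le_abs_self _
      have h9 : C' ≤ |C'| := le_abs_self _
      linarith
    have hab : a ≤ b := le_trans ha0 hb0
    have hcont : ContinuousOn (fun t => f t - g t) (Icc a b) :=
      (hfc.sub hgc).continuousOn
    have hmem : (0:ℝ) ∈ Icc ((fun t => f t - g t) b) ((fun t => f t - g t) a) :=
      ⟨by simp; linarith, by simp; linarith⟩
    obtain ⟨x, _, hx⟩ := intermediate_value_Icc' hab hcont hmem
    exact ⟨x, by linarith [sub_eq_zero.mp hx]⟩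
  · -- value at crossing equals sup of deltaA'
    intro xs hxs
    set c : ℝ := hRAS α S hS (pt xs (α * xs + β)) with hc
    apply le_antisymm
    · -- c ≤ sup': find maximizers
      obtain ⟨p, hpS, hp⟩ := Finset.exists_mem_eq_sup' hS
        (fun p => hRA α p (pt xs (α * xs + β)))
      obtain ⟨q, hqT, hq⟩ := Finset.exists_mem_eq_sup' hT
        (fun p => hLA α p (pt xs (α * xs + β)))
      have hcp : c = hRA α p (pt xs (α * xs + β)) := hp
      have hcq : c = hLA α q (pt xs (α * xs + β)) := hxs.trans hq
      have hle : c ≤ deltaA' p q α β := by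
        apply le_ciInf
        intro x
        rcases le_total x xs with h | h
        · refine le_trans ?_ (le_max_right _ _)
          rw [hcp]
          exact hRA_anti α β p h
        · refine le_trans ?_ (le_max_left _ _)
          rw [hcq]
          exact hLA_mono α β q h
      have hle2 := Finset.le_sup' (s := S ×ˢ T) (fun pq : Pt × Pt => deltaA' pq.1 pq.2 α β)
        (b := (p, q)) (Finset.mem_product.mpr ⟨hpS, hqT⟩)
      exact le_trans hle hle2
    · -- sup' ≤ c
      apply Finset.sup'_le
      rintro ⟨p, q⟩ hpq
      obtain ⟨hpS, hqT⟩ := Finset.mem_product.mp hpq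
      have hbdd : BddBelow (Set.range fun x : ℝ =>
          max (hLA α q (pt x (α * x + β))) (hRA α p (pt x (α * x + β)))) := by
        refine ⟨0, ?_⟩
        rintro r ⟨x, rfl⟩
        exact le_trans infDist_nonneg (le_max_left _ _)
      calc deltaA' p q α β
          ≤ max (hLA α q (pt xs (α * xs + β))) (hRA α p (pt xs (α * xs + β))) :=
            ciInf_le hbdd xs
        _ ≤ c := by
            apply max_le
            · rw [hxs]
              exact Finset.le_sup' (fun p => hLA α p (pt xs (α * xs + β))) hqT
            · exact Finset.le_sup' (fun p => hRA α p (pt xs (α * xs + β))) hpS
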